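/- Let n ≥ 2. Suppose (x,p) and (x',p') are points of ℝⁿ × ℝⁿ, each nonzero and each satisfying the constraints xⱼpₖ − xₖpⱼ = 0 (respectively x'ⱼp'ₖ − x'ₖp'ⱼ = 0) for all j,k. If there exists a complex n×n matrix A with AᵀA = 1 and det A = 1 such that x' + i p' = A (x + i p), then there exists a real n×n matrix B with BᵀB = 1 and det B = 1 such that x' = B x and p' = B p. That is, each SO(n,ℂ)-orbit intersects the constraint surface in at most one SO(n)-orbit. -/

import Mathlib

open Matrix

noncomputable def hrefl {n : ℕ} (w : Fin n → ℝ) : Matrix (Fin n) (Fin n) ℝ :=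
  1 - (2 / (w ⬝ᵥ w)) • Matrix.vecMulVec w w

lemma vmv_mulVec {n : ℕ} (u v w : Fin n → ℝ) :
    Matrix.vecMulVec u v *ᵥ w = (v ⬝ᵥ w) • u := by
  ext i
  simp only [Matrix.mulVec, Matrix.vecMulVec_apply, dotProduct, Pi.smul_apply,
    smul_eq_mul, Finset.sum_mul]
  exact Finset.sum_congr rfl fun m _ => by ring

lemma vmv_mul_vmv {n : ℕ} (u v u' v' : Fin n → ℝ) :
    Matrix.vecMulVec u v * Matrix.vecMulVec u' v' = (v ⬝ᵥ u') • Matrix.vecMulVec u v' := by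
  ext i j
  simp only [Matrix.mul_apply, Matrix.vecMulVec_apply, Matrix.smul_apply, dotProduct,
    smul_eq_mul, Finset.sum_mul]
  exact Finset.sum_congr rfl fun m _ => by ring

lemma hrefl_transpose {n : ℕ} (w : Fin n → ℝ) : (hrefl w)ᵀ = hrefl w := by
  unfold hrefl
  rw [Matrix.transpose_sub, Matrix.transpose_one, Matrix.transpose_smul]
  congr 1
  ext i j
  simp [Matrix.vecMulVec_apply, mul_comm]

lemma hrefl_mul_self {n : ℕ} (w : Fin n → ℝ) (hw : w ⬝ᵥ w ≠ 0) :
    hrefl w * hrefl w = 1 := by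
  unfold hrefl
  simp only [Matrix.sub_mul, Matrix.mul_sub, Matrix.one_mul, Matrix.mul_one, Matrix.smul_mul,
    Matrix.mul_smul, vmv_mul_vmv, smul_smul]
  have hcd : 2 / (w ⬝ᵥ w) * (w ⬝ᵥ w) = 2 := div_mul_cancel₀ 2 hw
  rw [hcd]
  module

lemma hrefl_det {n : ℕ} (w : Fin n → ℝ) (hw : w ⬝ᵥ w ≠ 0) :
    (hrefl w).det = -1 := by
  have : hrefl w = 1 + Matrix.replicateCol Unit ((-(2 / (w ⬝ᵥ w))) • w) * Matrix.replicateRow Unit w := by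
    unfold hrefl
    rw [sub_eq_add_neg]
    congr 1
    rw [Matrix.vecMulVec_eq Unit]
    ext i j
    simp [Matrix.replicateCol, Matrix.replicateRow, Matrix.mul_apply]
    ring
  rw [this, Matrix.det_one_add_replicateCol_mul_replicateRow]
  rw [dotProduct_smul]
  simp only [smul_eq_mul, neg_mul]
  field_simp
  norm_num

lemma hrefl_mulVec {n : ℕ} (w v : Fin n → ℝ) :
    hrefl w *ᵥ v = v - (2 * (w ⬝ᵥ v) / (w ⬝ᵥ w)) • w := by
  unfold hrefl
  rw [Matrix.sub_mulVec, Matrix.one_mulVec, Matrix.smul_mulVec, vmv_mulVec, smul_smul]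
  congr 1
  rw [div_mul_eq_mul_div, mul_comm]

lemma core_exists {n : ℕ} (hn : 2 ≤ n) (v v' : Fin n → ℝ) (hv : v ≠ 0)
    (hnorm : v ⬝ᵥ v = v' ⬝ᵥ v') :
    ∃ B : Matrix (Fin n) (Fin n) ℝ, Bᵀ * B = 1 ∧ B.det = 1 ∧ B *ᵥ v = v' := by
  by_cases hvv : v = v'
  · exact ⟨1, by simp, by simp, by simp [hvv]⟩
  · obtain ⟨j, hj⟩ : ∃ j, v j ≠ 0 := by
      by_contra h; push_neg at h; exact hv (funext h)
    obtain ⟨k, hk⟩ : ∃ k : Fin n, k ≠ j :=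
      Fintype.exists_ne_of_one_lt_card (by simp; omega) j
    set u : Fin n → ℝ := Pi.single k (v j) - Pi.single j (v k) with hu_def
    have huv : u ⬝ᵥ v = 0 := by
      rw [hu_def, sub_dotProduct, single_dotProduct, single_dotProduct]
      ring
    have huk : u k = v j := by
      simp [hu_def, Pi.single_apply, hk]
    have hu0 : u ≠ 0 := by
      intro h
      rw [h] at huk
      exact hj (by simpa using huk.symm)
    have huu : u ⬝ᵥ u ≠ 0 := fun h => hu0 (dotProduct_self_eq_zero.mp h)
    set w : Fin n → ℝ := v - v' with hw_def
    have hw0 : w ≠ 0 := sub_ne_zero.mpr hvv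
    have hww : w ⬝ᵥ w ≠ 0 := fun h => hw0 (dotProduct_self_eq_zero.mp h)
    refine ⟨hrefl w * hrefl u, ?_, ?_, ?_⟩
    · rw [Matrix.transpose_mul, hrefl_transpose, hrefl_transpose, Matrix.mul_assoc,
        ← Matrix.mul_assoc (hrefl w), hrefl_mul_self w hww, Matrix.one_mul,
        hrefl_mul_self u huu]
    · rw [Matrix.det_mul, hrefl_det w hww, hrefl_det u huu]; norm_num
    · have hfix : hrefl u *ᵥ v = v := by
        rw [hrefl_mulVec, huv]
        simp
      have hwv : w ⬝ᵥ w = 2 * (w ⬝ᵥ v) := by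
        rw [hw_def, dotProduct_sub, sub_dotProduct, sub_dotProduct,
          dotProduct_comm v' v]
        linarith [hnorm]
      have hone : 2 * (w ⬝ᵥ v) / (w ⬝ᵥ w) = 1 := by
        have h2 := hww
        rw [hwv] at h2 ⊢
        exact div_self h2
      rw [← Matrix.mulVec_mulVec, hfix, hrefl_mulVec w v, hone, one_smul, hw_def]
      abel

lemma cauchy_eq {n : ℕ} (x p : Fin n → ℝ) (hc : ∀ j k : Fin n, x j * p k - x k * p j = 0) :
    (∑ j, x j * p j) * (∑ j, x j * p j) = (∑ j, x j * x j) * (∑ j, p j * p j) := by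
  have h0 : ∑ j : Fin n, ∑ k : Fin n, x j * p k * (x j * p k - x k * p j) = 0 := by
    simp [hc]
  have h1 : (∑ j, x j * x j) * (∑ j, p j * p j) - (∑ j, x j * p j) * (∑ j, x j * p j)
      = ∑ j : Fin n, ∑ k : Fin n, x j * p k * (x j * p k - x k * p j) := by
    rw [Finset.sum_mul_sum, Finset.sum_mul_sum, ← Finset.sum_sub_distrib]
    refine Finset.sum_congr rfl fun j _ => ?_
    rw [← Finset.sum_sub_distrib]
    exact Finset.sum_congr rfl fun k _ => by ring
  linarith [h1, h0]

lemma sum_sq_zero {n : ℕ} {v : Fin n → ℝ} (h : (∑ j, v j * v j) = 0) : v = 0 := by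
  funext k
  have := (Finset.sum_eq_zero_iff_of_nonneg
    (fun j _ => mul_self_nonneg (v j))).mp h k (Finset.mem_univ k)
  exact mul_self_eq_zero.mp this

lemma expand_dot {n : ℕ} (a b : Fin n → ℝ) :
    (fun j => ((a j : ℂ) + Complex.I * b j)) ⬝ᵥ (fun j => ((a j : ℂ) + Complex.I * b j))
      = (((∑ j, a j * a j) - (∑ j, b j * b j) : ℝ) : ℂ)
        + Complex.I * ((2 * ∑ j, a j * b j : ℝ) : ℂ) := by
  have key : ∀ j : Fin n, ((a j : ℂ) + Complex.I * b j) * ((a j : ℂ) + Complex.I * b j)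
      = (((a j * a j : ℝ) : ℂ) - ((b j * b j : ℝ) : ℂ))
        + Complex.I * ((2 * (a j * b j) : ℝ) : ℂ) := by
    intro j
    push_cast
    linear_combination ((b j : ℂ))^2 * Complex.I_sq
  simp only [dotProduct]
  rw [Finset.sum_congr rfl fun j _ => key j]
  simp only [Complex.ofReal_mul, Complex.ofReal_sum, Complex.ofReal_sub, Complex.ofReal_ofNat,
    Finset.sum_add_distrib, Finset.sum_sub_distrib, ← Finset.mul_sum]

/-- Each `SO(n,ℂ)`-orbit intersects the `SO(n)` constraint surface in at most
one `SO(n)`-orbit: if two nonzero constrained points `(x,p)` and `(x',p')` of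
`ℝⁿ × ℝⁿ ≅ ℂⁿ` are related by some `A ∈ SO(n,ℂ)`, then they are related by some
real `B ∈ SO(n)` acting diagonally. -/
theorem stmt8 (n : ℕ) (hn : 2 ≤ n) (x p x' p' : Fin n → ℝ)
    (h1 : (x, p) ≠ 0) (h2 : (x', p') ≠ 0)
    (hc : ∀ j k : Fin n, x j * p k - x k * p j = 0)
    (hc' : ∀ j k : Fin n, x' j * p' k - x' k * p' j = 0)
    (A : Matrix (Fin n) (Fin n) ℂ) (hA : Aᵀ * A = 1) (hdet : A.det = 1)
    (horb : (fun j => (x' j : ℂ) + Complex.I * (p' j : ℂ)) =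
        A.mulVec fun j => (x j : ℂ) + Complex.I * (p j : ℂ)) :
    ∃ B : Matrix (Fin n) (Fin n) ℝ, Bᵀ * B = 1 ∧ B.det = 1 ∧
      x' = B.mulVec x ∧ p' = B.mulVec p := by
  -- invariance of the complex bilinear form
  have hdot : (fun j => ((x' j : ℂ) + Complex.I * p' j)) ⬝ᵥ
        (fun j => ((x' j : ℂ) + Complex.I * p' j))
      = (fun j => ((x j : ℂ) + Complex.I * p j)) ⬝ᵥ
        (fun j => ((x j : ℂ) + Complex.I * p j)) := by
    rw [horb, Matrix.dotProduct_mulVec, ← Matrix.mulVec_transpose, Matrix.mulVec_mulVec,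
      hA, Matrix.one_mulVec]
  rw [expand_dot, expand_dot] at hdot
  have hre : (∑ j, x' j * x' j) - (∑ j, p' j * p' j)
      = (∑ j, x j * x j) - (∑ j, p j * p j) := by
    have := congrArg Complex.re hdot
    simpa using this
  have him : (∑ j, x' j * p' j) = ∑ j, x j * p j := by
    have := congrArg Complex.im hdot
    simp at this
    linarith
  have c1 := cauchy_eq x p hc
  have c2 := cauchy_eq x' p' hc'
  have hxx_nonneg : (0:ℝ) ≤ ∑ j, x j * x j :=
    Finset.sum_nonneg fun j _ => mul_self_nonneg _
  have hpp_nonneg : (0:ℝ) ≤ ∑ j, p j * p j :=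
    Finset.sum_nonneg fun j _ => mul_self_nonneg _
  have hxx'_nonneg : (0:ℝ) ≤ ∑ j, x' j * x' j :=
    Finset.sum_nonneg fun j _ => mul_self_nonneg _
  have hpp'_nonneg : (0:ℝ) ≤ ∑ j, p' j * p' j :=
    Finset.sum_nonneg fun j _ => mul_self_nonneg _
  have hsum_sq : ((∑ j, x j * x j) + ∑ j, p j * p j)^2
      = ((∑ j, x' j * x' j) + ∑ j, p' j * p' j)^2 := by
    linear_combination (-(((∑ j, x' j * x' j) - ∑ j, p' j * p' j) +
        ((∑ j, x j * x j) - ∑ j, p j * p j))) * hre + (-4) * c1 + 4 * c2 +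
      (-4 * ((∑ j, x j * p j) + ∑ j, x' j * p' j)) * him
  have hsum_eq : (∑ j, x j * x j) + (∑ j, p j * p j)
      = (∑ j, x' j * x' j) + ∑ j, p' j * p' j := by
    have h1' := Real.sqrt_sq (add_nonneg hxx_nonneg hpp_nonneg)
    have h2' := Real.sqrt_sq (add_nonneg hxx'_nonneg hpp'_nonneg)
    rw [← h1', ← h2', hsum_sq]
  have hxx_eq : (∑ j, x j * x j) = ∑ j, x' j * x' j := by linarith
  have hpp_eq : (∑ j, p j * p j) = ∑ j, p' j * p' j := by linarith
  by_cases hx0 : x = 0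
  · have hsxx0 : (∑ j, x j * x j) = 0 := by simp [hx0]
    have hx'0 : x' = 0 := sum_sq_zero (by rw [← hxx_eq]; exact hsxx0)
    have hp0 : p ≠ 0 := by
      intro h
      exact h1 (by rw [hx0, h]; rfl)
    obtain ⟨B, hB1, hB2, hB3⟩ := core_exists hn p p' hp0 hpp_eq
    exact ⟨B, hB1, hB2, by rw [hx0, hx'0, Matrix.mulVec_zero], hB3.symm⟩
  · have hsxx_ne : (∑ j, x j * x j) ≠ 0 := fun h => hx0 (sum_sq_zero h)
    have hx'0 : x' ≠ 0 := fun h => hsxx_ne (by rw [hxx_eq, h]; simp)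
    -- p is proportional to x with ratio sxp / sxx
    have hlam : p = ((∑ j, x j * p j) / (∑ j, x j * x j)) • x := by
      funext k
      have h : (∑ j, x j * x j) * p k = x k * ∑ j, x j * p j := by
        calc (∑ j, x j * x j) * p k = ∑ j, x j * (x j * p k) := by
              rw [Finset.sum_mul]
              exact Finset.sum_congr rfl fun j _ => by ring
          _ = ∑ j, x j * (x k * p j) :=
              Finset.sum_congr rfl fun j _ => by rw [sub_eq_zero.mp (hc j k)]
          _ = x k * ∑ j, x j * p j := by
              rw [Finset.mul_sum]
              exact Finset.sum_congr rfl fun j _ => by ring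
      have : p k = (∑ j, x j * p j) / (∑ j, x j * x j) * x k := by
        rw [div_mul_eq_mul_div, eq_div_iff hsxx_ne]
        linarith
      simpa using this
    have hlam' : p' = ((∑ j, x j * p j) / (∑ j, x j * x j)) • x' := by
      funext k
      have h : (∑ j, x' j * x' j) * p' k = x' k * ∑ j, x' j * p' j := by
        calc (∑ j, x' j * x' j) * p' k = ∑ j, x' j * (x' j * p' k) := by
              rw [Finset.sum_mul]
              exact Finset.sum_congr rfl fun j _ => by ring
          _ = ∑ j, x' j * (x' k * p' j) :=
              Finset.sum_congr rfl fun j _ => by rw [sub_eq_zero.mp (hc' j k)]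
          _ = x' k * ∑ j, x' j * p' j := by
              rw [Finset.mul_sum]
              exact Finset.sum_congr rfl fun j _ => by ring
      rw [← hxx_eq, him] at h
      have : p' k = (∑ j, x j * p j) / (∑ j, x j * x j) * x' k := by
        rw [div_mul_eq_mul_div, eq_div_iff hsxx_ne]
        linarith
      simpa using this
    obtain ⟨B, hB1, hB2, hB3⟩ := core_exists hn x x' hx0 hxx_eq
    refine ⟨B, hB1, hB2, hB3.symm, ?_⟩
    rw [hlam', ← hB3, ← Matrix.mulVec_smul, ← hlam]
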